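/- Let h : ℝ → ℝ be continuous, nonnegative, 2π-periodic, with Fourier coefficients c_n (so h(θ) = Σ_{n∈ℤ} c_n e^{inθ}, c_{-n} = conj(c_n)). For α ∈ ℝ let I₊^α = [α, α+π/2) ∪ [α+π, α+3π/2). Then (1/2π) ∫₀^{2π} |∫_{I₊^α} e^{2iθ} h(θ) dθ|² dα = π²|c₂|² + 16 Σ_{n ≡ 2 mod 4} |c_{n-2}|²/n² ≥ π²|c₂|² + 4|c₀|². -/

import Mathlib

open scoped Real
open MeasureTheory Set AddCircle

section Aux

lemma fqi_fubini {f : ℝ → ℝ → ℂ} (hf : Continuous fun p : ℝ × ℝ => f p.1 p.2)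
    {a b c d : ℝ} (hab : a ≤ b) (hcd : c ≤ d) :
    ∫ x in a..b, ∫ y in c..d, f x y = ∫ y in c..d, ∫ x in a..b, f x y := by
  simp_rw [intervalIntegral.integral_of_le hab, intervalIntegral.integral_of_le hcd]
  apply MeasureTheory.integral_integral_swap
  rw [Function.uncurry_def, Measure.prod_restrict]
  exact ((hf.continuousOn).integrableOn_compact (isCompact_Icc.prod isCompact_Icc)).mono_set
    (Set.prod_mono Ioc_subset_Icc_self Ioc_subset_Icc_self)

lemma fqi_exp_int_pi (k : ℤ) : Complex.exp (k * Real.pi * Complex.I) = (-1) ^ k := by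
  rw [show ((k : ℂ) * Real.pi * Complex.I) = k * (Real.pi * Complex.I) by ring]
  rw [Complex.exp_int_mul, Complex.exp_pi_mul_I]

/-- periodicity of `exp(-(n t i))` -/
lemma fqi_exp_per (n : ℤ) :
    Function.Periodic (fun t : ℝ => Complex.exp (-(n * t * Complex.I))) (2 * π) := by
  intro t
  simp only
  rw [show -((n:ℂ) * (↑(t + 2 * π)) * Complex.I) = -(n * t * Complex.I) + (-n : ℤ) * (2 * π * Complex.I)
    by push_cast; ring, Complex.exp_add, Complex.exp_int_mul_two_pi_mul_I, mul_one]

lemma fqi_exp_shift (n : ℤ) (s t : ℝ) :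
    Complex.exp (-(n * (t:ℂ) * Complex.I))
      = Complex.exp (n * s * Complex.I) * Complex.exp (-(n * (↑(t + s)) * Complex.I)) := by
  rw [← Complex.exp_add]; congr 1; push_cast; ring

lemma fqi_J (m : ℤ) (hm : m ≠ 0) :
    ∫ u in (0:ℝ)..(π/2), Complex.exp (m * u * Complex.I)
      = (Complex.exp (m * (π/2 : ℝ) * Complex.I) - 1) / (m * Complex.I) := by
  have h1 : ∀ u : ℝ, (m:ℂ) * u * Complex.I = (m * Complex.I) * u := fun u => by ring
  have hne : (m:ℂ) * Complex.I ≠ 0 :=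
    mul_ne_zero (Int.cast_ne_zero.mpr hm) Complex.I_ne_zero
  simp_rw [h1]
  rw [integral_exp_mul_complex hne]
  norm_num

end Aux

theorem fourier_quadrant_identity (h : ℝ → ℝ) (hcont : Continuous h)
    (hnonneg : ∀ θ, 0 ≤ h θ) (hper : ∀ θ, h (θ + 2 * π) = h θ)
    (c : ℤ → ℂ)
    (hc : ∀ n : ℤ, c n = (1 / (2 * π)) *
      ∫ θ in (0:ℝ)..(2 * π), (h θ : ℂ) * Complex.exp (-(n * θ * Complex.I)))
    (F : ℝ → ℂ)
    (hF : ∀ α : ℝ, F α =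
      (∫ θ in α..(α + π / 2), Complex.exp (2 * θ * Complex.I) * (h θ : ℂ)) +
      (∫ θ in (α + π)..(α + 3 * π / 2),
        Complex.exp (2 * θ * Complex.I) * (h θ : ℂ))) :
    (1 / (2 * π)) * (∫ α in (0:ℝ)..(2 * π), (‖F α‖) ^ 2)
      = π ^ 2 * (‖c 2‖) ^ 2
        + 16 * ∑' n : ℤ, (if n % 4 = 2 then (‖c (n - 2)‖) ^ 2 / (n : ℝ) ^ 2 else 0) ∧
    π ^ 2 * (‖c 2‖) ^ 2
        + 16 * ∑' n : ℤ, (if n % 4 = 2 then (‖c (n - 2)‖) ^ 2 / (n : ℝ) ^ 2 else 0)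
      ≥ π ^ 2 * (‖c 2‖) ^ 2 + 4 * (‖c 0‖) ^ 2 := by
  haveI : Fact (0 < 2 * π) := ⟨by positivity⟩
  have hπ : (π:ℝ) ≠ 0 := Real.pi_ne_zero
  have hπc : (π:ℂ) ≠ 0 := by exact_mod_cast hπ
  have hcont' : Continuous fun θ : ℝ => (h θ : ℂ) := Complex.continuous_ofReal.comp hcont
  -- the combined integrand
  set g : ℝ → ℂ := fun θ => Complex.exp (2 * θ * Complex.I) * ((h θ : ℂ) + (h (θ + π) : ℂ))
    with hgdef
  have hgc : Continuous g := by rw [hgdef]; fun_prop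
  have hexp_per : ∀ θ : ℝ, Complex.exp (2 * (↑(θ + 2 * π)) * Complex.I)
      = Complex.exp (2 * θ * Complex.I) := by
    intro θ
    rw [show (2 * (↑(θ + 2 * π)) * Complex.I : ℂ)
        = 2 * θ * Complex.I + (2:ℤ) * (2 * π * Complex.I) by push_cast; ring,
      Complex.exp_add, Complex.exp_int_mul_two_pi_mul_I, mul_one]
  have hgper : Function.Periodic g (2 * π) := by
    intro θ
    simp only [hgdef]
    rw [hexp_per θ, hper θ, show θ + 2 * π + π = (θ + π) + 2 * π by ring, hper (θ + π)]
  -- F as single integral of g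
  have hexp_pi : ∀ θ : ℝ, Complex.exp (2 * (↑(θ + π)) * Complex.I)
      = Complex.exp (2 * θ * Complex.I) := by
    intro θ
    rw [show (2 * (↑(θ + π)) * Complex.I : ℂ)
        = 2 * θ * Complex.I + (1:ℤ) * (2 * π * Complex.I) by push_cast; ring,
      Complex.exp_add, Complex.exp_int_mul_two_pi_mul_I, mul_one]
  have hFg : ∀ α : ℝ, F α = ∫ θ in α..(α + π/2), g θ := by
    intro α
    rw [hF α]
    have e2 : (∫ θ in (α + π)..(α + 3 * π / 2),
        Complex.exp (2 * θ * Complex.I) * (h θ : ℂ))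
        = ∫ θ in α..(α + π/2), Complex.exp (2 * θ * Complex.I) * (h (θ + π) : ℂ) := by
      have := intervalIntegral.integral_comp_add_right
        (a := α) (b := α + π/2) (fun θ => Complex.exp (2 * θ * Complex.I) * (h θ : ℂ)) π
      rw [show α + 3 * π / 2 = α + π/2 + π by ring, ← this]
      apply intervalIntegral.integral_congr
      intro x _
      simp only
      rw [hexp_pi x]
    have i1 : IntervalIntegrable
        (fun θ : ℝ => Complex.exp (2 * θ * Complex.I) * (h θ : ℂ))
        MeasureTheory.volume α (α + π/2) := by
      apply Continuous.intervalIntegrable; fun_prop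
    have i2 : IntervalIntegrable
        (fun θ : ℝ => Complex.exp (2 * θ * Complex.I) * (h (θ + π) : ℂ))
        MeasureTheory.volume α (α + π/2) := by
      apply Continuous.intervalIntegrable; fun_prop
    rw [e2, ← intervalIntegral.integral_add i1 i2]
    apply intervalIntegral.integral_congr
    intro x _
    simp only [hgdef]
    ring
  -- continuity and periodicity of F
  have hFcont : Continuous F := by
    have hprim : Continuous fun x : ℝ => ∫ t in (0:ℝ)..x, g t :=
      intervalIntegral.continuous_primitive (fun a b => hgc.intervalIntegrable a b) 0
    have : F = fun α => (∫ t in (0:ℝ)..(α + π/2), g t) - ∫ t in (0:ℝ)..α, g t := by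
      funext α
      rw [hFg α, ← intervalIntegral.integral_interval_sub_left
        (hgc.intervalIntegrable 0 (α + π/2)) (hgc.intervalIntegrable 0 α)]
    rw [this]
    exact (hprim.comp (continuous_id.add continuous_const)).sub hprim
  have hFper : Function.Periodic F (2 * π) := by
    intro α
    rw [hFg (α + 2 * π), hFg α,
      show α + 2 * π + π/2 = (α + π/2) + 2 * π by ring,
      ← intervalIntegral.integral_comp_add_right g (2 * π)]
    apply intervalIntegral.integral_congr
    intro x _
    exact hgper x
  -- lift to the circle
  set f : AddCircle (2 * π) → ℂ := hFper.lift with hfdef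
  have hfc : Continuous f := hFcont.quotient_liftOn' _
  set fc : C(AddCircle (2 * π), ℂ) := ⟨f, hfc⟩ with hfcdef
  set fLp : Lp ℂ 2 (@haarAddCircle (2 * π) _) := ContinuousMap.toLp 2 haarAddCircle ℂ fc
    with hfLp
  have hae : ⇑fLp =ᵐ[haarAddCircle] f := ContinuousMap.coeFn_toLp haarAddCircle fc
  have hcoeff : ∀ m : ℤ, fourierCoeff (⇑fLp) m = fourierCoeff f m := by
    intro m
    apply MeasureTheory.integral_congr_ae
    filter_upwards [hae] with t ht
    rw [ht]
  have hpars : ∑' m : ℤ, ‖fourierCoeff f m‖^2 = ∫ t, ‖f t‖^2 ∂haarAddCircle := by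
    rw [← (funext hcoeff : (fun m => fourierCoeff (⇑fLp) m) = _), tsum_sq_fourierCoeff fLp]
    apply MeasureTheory.integral_congr_ae
    filter_upwards [hae] with t ht
    rw [ht]
  have hsum : Summable fun m : ℤ => ‖fourierCoeff f m‖^2 := by
    have h1 := (lp.memℓp (fourierBasis.repr fLp)).summable (by norm_num)
    convert h1 using 2 with m
    rw [fourierBasis_repr, hcoeff m]
    norm_num
  have hint : ∫ t, ‖f t‖^2 ∂haarAddCircle
      = (1/(2 * π)) * ∫ α in (0:ℝ)..(2 * π), ‖F α‖^2 := by
    have h0 := AddCircle.intervalIntegral_preimage (2 * π) 0 (fun z => ‖f z‖^2)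
    rw [zero_add, volume_eq_smul_haarAddCircle, MeasureTheory.integral_smul_measure _ _,
      ENNReal.toReal_ofReal (by positivity : (0:ℝ) ≤ 2 * π), smul_eq_mul] at h0
    have h1 : ∀ α : ℝ, ‖f (α : AddCircle (2 * π))‖^2 = ‖F α‖^2 := by
      intro α
      rw [hfdef, hFper.lift_coe]
    simp_rw [h1] at h0
    rw [h0]
    field_simp
  -- intermediate: integral against exp over a period, in terms of c
  have hcint : ∀ n : ℤ, (∫ θ in (0:ℝ)..(2 * π),
      Complex.exp (-(n * θ * Complex.I)) * (h θ : ℂ)) = 2 * π * c n := by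
    intro n
    rw [hc n]
    have : (∫ θ in (0:ℝ)..(2 * π), Complex.exp (-(n * θ * Complex.I)) * (h θ : ℂ))
        = ∫ θ in (0:ℝ)..(2 * π), (h θ : ℂ) * Complex.exp (-(n * θ * Complex.I)) := by
      apply intervalIntegral.integral_congr
      intro x _
      ring
    rw [this]
    field_simp
    simp only [mul_right_comm _ Complex.I]
  have hQper : ∀ n : ℤ, Function.Periodic
      (fun t : ℝ => Complex.exp (-(n * t * Complex.I)) * (h t : ℂ)) (2 * π) :=
    fun n => (fqi_exp_per n).mul (fun t => by
      show ((h (t + 2 * π) : ℝ) : ℂ) = ((h t : ℝ) : ℂ)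
      exact_mod_cast hper t)
  -- the shifted version
  have hcint' : ∀ n : ℤ, (∫ θ in (0:ℝ)..(2 * π),
      Complex.exp (-(n * θ * Complex.I)) * (h (θ + π) : ℂ))
      = Complex.exp (n * π * Complex.I) * (2 * π * c n) := by
    intro n
    have e1 : ∀ θ : ℝ, Complex.exp (-(n * θ * Complex.I)) * (h (θ + π) : ℂ)
        = Complex.exp (n * π * Complex.I) *
          ((fun t : ℝ => Complex.exp (-(n * t * Complex.I)) * (h t : ℂ)) (θ + π)) := by
      intro θ
      rw [fqi_exp_shift n π θ]
      push_cast
      ring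
    simp_rw [e1]
    rw [intervalIntegral.integral_const_mul]
    congr 1
    rw [intervalIntegral.integral_comp_add_right
      (fun t : ℝ => Complex.exp (-(n * t * Complex.I)) * (h t : ℂ)) π, zero_add]
    have := (hQper n).intervalIntegral_add_eq π 0
    rw [zero_add, show π + 2 * π = 2 * π + π by ring] at this
    rw [this, hcint n]
  -- the g-transform
  have hgint : ∀ m : ℤ, (∫ β in (0:ℝ)..(2 * π),
      Complex.exp (-(m * β * Complex.I)) * g β)
      = 2 * π * c (m - 2) * (1 + Complex.exp ((m - 2 : ℤ) * π * Complex.I)) := by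
    intro m
    have e1 : ∀ β : ℝ, Complex.exp (-(m * β * Complex.I)) * g β
        = Complex.exp (-((m - 2 : ℤ) * β * Complex.I)) * (h β : ℂ)
          + Complex.exp (-((m - 2 : ℤ) * β * Complex.I)) * (h (β + π) : ℂ) := by
      intro β
      simp only [hgdef]
      rw [← mul_add, ← mul_assoc]
      congr 2
      rw [← Complex.exp_add]
      congr 1
      push_cast
      ring
    simp_rw [e1]
    have i1 : IntervalIntegrable
        (fun β : ℝ => Complex.exp (-((m - 2 : ℤ) * β * Complex.I)) * (h β : ℂ))
        MeasureTheory.volume 0 (2 * π) := by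
      apply Continuous.intervalIntegrable; fun_prop
    have i2 : IntervalIntegrable
        (fun β : ℝ => Complex.exp (-((m - 2 : ℤ) * β * Complex.I)) * (h (β + π) : ℂ))
        MeasureTheory.volume 0 (2 * π) := by
      apply Continuous.intervalIntegrable; fun_prop
    rw [intervalIntegral.integral_add i1 i2, hcint (m - 2), hcint' (m - 2)]
    push_cast
    ring
  -- the Fourier coefficients of f
  have hcoefff : ∀ m : ℤ, fourierCoeff f m
      = c (m - 2) * (1 + Complex.exp ((m - 2 : ℤ) * π * Complex.I))
          * ∫ u in (0:ℝ)..(π/2), Complex.exp (m * u * Complex.I) := by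
    intro m
    -- step 1: fourierCoeff as interval integral
    have h1 : fourierCoeff f m
        = (1/(2 * π) : ℂ) * ∫ α in (0:ℝ)..(2 * π),
            Complex.exp (-(m * α * Complex.I)) * F α := by
      rw [fourierCoeff_eq_intervalIntegral f m 0, zero_add, Complex.real_smul]
      push_cast
      congr 1
      apply intervalIntegral.integral_congr
      intro x _
      simp only [smul_eq_mul]
      congr 1
      rw [fourier_coe_apply]
      congr 1
      push_cast
      field_simp
    -- step 2: substitute hFg and write as double integral
    have h2 : ∀ α : ℝ, Complex.exp (-(m * α * Complex.I)) * F α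
        = ∫ u in (0:ℝ)..(π/2), Complex.exp (-(m * α * Complex.I)) * g (α + u) := by
      intro α
      have e0 : (∫ u in (0:ℝ)..(π/2), g (α + u)) = ∫ θ in α..(α + π/2), g θ := by
        rw [intervalIntegral.integral_comp_add_left g α, add_zero]
      rw [hFg α, ← e0, ← intervalIntegral.integral_const_mul]
    -- step 3: Fubini
    have h3 : (∫ α in (0:ℝ)..(2 * π),
        Complex.exp (-(m * α * Complex.I)) * F α)
        = ∫ u in (0:ℝ)..(π/2), ∫ α in (0:ℝ)..(2 * π),
            Complex.exp (-(m * α * Complex.I)) * g (α + u) := by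
      simp_rw [h2]
      exact fqi_fubini (by
        apply Continuous.mul
        · exact Complex.continuous_exp.comp (by fun_prop)
        · exact hgc.comp (continuous_fst.add continuous_snd))
        (by positivity) (by positivity)
    -- step 4: inner integral
    have h4 : ∀ u : ℝ, (∫ α in (0:ℝ)..(2 * π),
        Complex.exp (-(m * α * Complex.I)) * g (α + u))
        = Complex.exp (m * u * Complex.I) *
            ∫ β in (0:ℝ)..(2 * π), Complex.exp (-(m * β * Complex.I)) * g β := by
      intro u
      have e1 : ∀ α : ℝ, Complex.exp (-(m * α * Complex.I)) * g (α + u)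
          = Complex.exp (m * u * Complex.I) *
            ((fun β : ℝ => Complex.exp (-(m * β * Complex.I)) * g β) (α + u)) := by
        intro α
        simp only
        rw [fqi_exp_shift m u α]
        ring
      simp_rw [e1]
      rw [intervalIntegral.integral_const_mul]
      congr 1
      rw [intervalIntegral.integral_comp_add_right
        (fun β : ℝ => Complex.exp (-(m * β * Complex.I)) * g β) u, zero_add]
      have hGper : Function.Periodic
          (fun β : ℝ => Complex.exp (-(m * β * Complex.I)) * g β) (2 * π) :=
        (fqi_exp_per m).mul hgper
      have := hGper.intervalIntegral_add_eq u 0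
      rw [zero_add, show u + 2 * π = 2 * π + u by ring] at this
      rw [this]
    rw [h1, h3]
    simp_rw [h4]
    rw [intervalIntegral.integral_mul_const, hgint m]
    field_simp
    simp only [mul_right_comm _ Complex.I]
    ring
  
  -- values of the coefficients
  set s : ℤ → ℝ := fun n =>
    if n % 4 = 2 then (‖c (n - 2)‖) ^ 2 / (n : ℝ) ^ 2 else 0 with hsdef
  have hsnonneg : ∀ n, 0 ≤ s n := by
    intro n
    rw [hsdef]
    dsimp only
    split
    · positivity
    · exact le_refl 0
  have hval : ∀ m : ℤ, ‖fourierCoeff f m‖^2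
      = (if m = 0 then π^2 * (‖c (-2)‖)^2 else 0) + 16 * s m := by
    intro m
    rw [hcoefff m]
    by_cases hm0 : m = 0
    · subst hm0
      rw [show ((0:ℤ) - 2) = (-2 : ℤ) by norm_num]
      rw [show Complex.exp ((-2 : ℤ) * π * Complex.I) = 1 by
        rw [fqi_exp_int_pi (-2), Even.neg_one_zpow (by decide)]]
      rw [show (∫ u in (0:ℝ)..(π/2), Complex.exp ((0:ℤ) * u * Complex.I)) = ((π/2 : ℝ) : ℂ) by
        simp]
      rw [hsdef]
      norm_num [map_mul, Complex.norm_real,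
        abs_of_pos (by positivity : (0:ℝ) < π/2)]
      rw [mul_pow, mul_pow, div_pow, sq_abs]
      ring
    · rw [fqi_J m hm0]
      have hEint := fqi_exp_int_pi (m - 2)
      rcases (by omega : m % 4 = 0 ∨ m % 4 = 1 ∨ m % 4 = 2 ∨ m % 4 = 3) with hr | hr | hr | hr
      · -- m ≡ 0 [4], m ≠ 0 : J = 0
        obtain ⟨k, hk⟩ : ∃ k, m = 4 * k := ⟨m / 4, by omega⟩
        rw [show ((m:ℂ) * ((π/2 : ℝ):ℂ) * Complex.I) = k * (2 * π * Complex.I) by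
          rw [hk]; push_cast; ring, Complex.exp_int_mul_two_pi_mul_I]
        rw [hsdef]
        simp only [hm0, if_false]
        rw [if_neg (by omega : ¬ (m % 4 = 2))]
        simp
      · -- m odd
        rw [hEint, Odd.neg_one_zpow (by rw [Int.odd_iff]; omega)]
        rw [hsdef]
        simp only [hm0, if_false]
        rw [if_neg (by omega : ¬ (m % 4 = 2))]
        simp
      · -- m ≡ 2 [4]
        rw [hEint, Even.neg_one_zpow (by rw [Int.even_iff]; omega)]
        obtain ⟨k, hk⟩ : ∃ k, m = 4 * k + 2 := ⟨m / 4, by omega⟩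
        rw [show ((m:ℂ) * ((π/2 : ℝ):ℂ) * Complex.I) = (2 * k + 1 : ℤ) * π * Complex.I by
          rw [hk]; push_cast; ring, fqi_exp_int_pi (2 * k + 1),
          Odd.neg_one_zpow ⟨k, by ring⟩]
        rw [hsdef]
        simp only [hr, if_true, hm0, if_false, zero_add]
        rw [norm_mul, norm_mul, norm_div, norm_mul]
        simp only [Complex.norm_I, Complex.norm_intCast, mul_one]
        rw [show ‖(1 + 1 : ℂ)‖ = 2 by norm_num, show ‖(-1 - 1 : ℂ)‖ = 2 by
          norm_num [show (-1 - 1 : ℂ) = -2 by ring]]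
        have hmne : ((m:ℝ)) ≠ 0 := Int.cast_ne_zero.mpr hm0
        rw [mul_pow, mul_pow, div_pow, sq_abs]
        field_simp
        ring
      · -- m ≡ 3 [4] : odd
        rw [hEint, Odd.neg_one_zpow (by rw [Int.odd_iff]; omega)]
        rw [hsdef]
        simp only [hm0, if_false]
        rw [if_neg (by omega : ¬ (m % 4 = 2))]
        simp
  -- summability bookkeeping
  have he0sum : Summable (fun m : ℤ => if m = 0 then π^2 * (‖c (-2)‖)^2 else 0) := by
    apply summable_of_ne_finset_zero (s := {0})
    intro m hm
    simp only [Finset.mem_singleton] at hm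
    simp [hm]
  have hssum16 : Summable (fun m : ℤ => 16 * s m) := by
    have e : (fun m : ℤ => 16 * s m)
        = fun m => ‖fourierCoeff f m‖^2
            - (if m = 0 then π^2 * (‖c (-2)‖)^2 else 0) := by
      funext m
      rw [hval m]
      ring
    rw [e]
    exact hsum.sub he0sum
  have hssum : Summable s := by
    have := hssum16.div_const 16
    convert this using 2 with m
    · rfl
    · ring
  have htsum : ∑' m : ℤ, ‖fourierCoeff f m‖^2
      = π^2 * (‖c (-2)‖)^2 + 16 * ∑' m, s m := by
    calc ∑' m : ℤ, ‖fourierCoeff f m‖^2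
        = ∑' m : ℤ, ((if m = 0 then π^2 * (‖c (-2)‖)^2 else 0) + 16 * s m) := by
          exact tsum_congr hval
      _ = (∑' m : ℤ, (if m = 0 then π^2 * (‖c (-2)‖)^2 else 0))
            + ∑' m : ℤ, 16 * s m := Summable.tsum_add he0sum hssum16
      _ = π^2 * (‖c (-2)‖)^2 + 16 * ∑' m, s m := by
          rw [tsum_ite_eq, tsum_mul_left]
  -- |c (-2)| = |c 2|
  have hcconj : ‖c (-2)‖ = ‖c 2‖ := by
    have e : c (-2) = (starRingEnd ℂ) (c 2) := by
      rw [hc (-2), hc 2, map_mul]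
      congr 1
      · rw [map_div₀, map_one, map_mul, Complex.conj_ofReal]
        norm_num [map_ofNat]
      · rw [intervalIntegral.integral_of_le (by positivity : (0:ℝ) ≤ 2 * π),
          intervalIntegral.integral_of_le (by positivity : (0:ℝ) ≤ 2 * π),
          ← integral_conj]
        apply MeasureTheory.integral_congr_ae
        apply Filter.Eventually.of_forall
        intro θ
        simp only [map_mul, Complex.conj_ofReal, ← Complex.exp_conj, map_neg, Complex.conj_I,
          map_ofNat, map_intCast]
        congr 2
        push_cast
        ring
    rw [e, Complex.norm_conj]
  constructor
  · rw [← hint, ← hpars, htsum, hcconj]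
  · rw [ge_iff_le, add_le_add_iff_left]
    have h2 : s 2 ≤ ∑' m, s m := Summable.le_tsum hssum 2 (fun j _ => hsnonneg j)
    have e2 : s 2 = (‖c 0‖)^2 / 4 := by
      rw [hsdef]
      norm_num
    rw [e2] at h2
    linarith
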